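/- For every H in (1/2,1) and all reals 0 < s < t, the kernel Z_H admits the alternative integral representation Z_H(t,s) = κ_H·(H−1/2)·s^{1/2−H}·∫_s^t u^{H−1/2}(u−s)^{H−3/2} du; that is, (H−1/2)·s^{1/2−H}·∫_s^t u^{H−1/2}(u−s)^{H−3/2} du = (t/s)^{H−1/2}(t−s)^{H−1/2} − (H−1/2)·s^{1/2−H}·∫_s^t u^{H−3/2}(u−s)^{H−1/2} du. In particular, the operator Γ*_{H,T} applied to the indicator function 1_{[0,t]} equals Z_H(t,·) on (0,t), so the transform definition of the fractional Wiener integral is consistent with the kernel representation of fractional Brownian motion. -/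

import Mathlib

open MeasureTheory Real Set intervalIntegral

/-- The normalizing constant `κ_H`. -/
noncomputable def kappaH (H : ℝ) : ℝ :=
  Real.sqrt (2 * H * Real.Gamma (3/2 - H) / (Real.Gamma (H + 1/2) * Real.Gamma (2 - 2*H)))

/-- The kernel `Z_H(t,s)` of the moving-average representation of fractional
Brownian motion with Hurst parameter `H`. -/
noncomputable def ZH (H t s : ℝ) : ℝ :=
  kappaH H * ((t / s) ^ (H - 1/2) * (t - s) ^ (H - 1/2)
    - (H - 1/2) * s ^ ((1:ℝ)/2 - H) * ∫ u in s..t, u ^ (H - 3/2) * (u - s) ^ (H - 1/2))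

/-- The transfer operator `Γ*_{H,T}`:
`(Γ*_{H,T} f)(t) = (H - 1/2) κ_H t^{1/2-H} ∫_t^T u^{H-1/2} (u-t)^{H-3/2} f(u) du`. -/
noncomputable def gammaStar (H T : ℝ) (f : ℝ → ℝ) (t : ℝ) : ℝ :=
  (H - 1/2) * kappaH H * t ^ ((1:ℝ)/2 - H) *
    ∫ u in t..T, u ^ (H - 1/2) * (u - t) ^ (H - 3/2) * f u

/-- Alternative integral representation of the kernel `Z_H`: for `1/2 < H < 1` and
`0 < s < t`,
`(H-1/2) s^{1/2-H} ∫_s^t u^{H-1/2}(u-s)^{H-3/2} du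
  = (t/s)^{H-1/2}(t-s)^{H-1/2} - (H-1/2) s^{1/2-H} ∫_s^t u^{H-3/2}(u-s)^{H-1/2} du`,
i.e. `Z_H(t,s) = κ_H (H-1/2) s^{1/2-H} ∫_s^t u^{H-1/2}(u-s)^{H-3/2} du`.
In particular, `Γ*_{H,T}` applied to the indicator of `[0,t]` equals `Z_H(t,·)`
on `(0,t)`, so the transform definition of the fractional Wiener integral is
consistent with the kernel representation of fractional Brownian motion. -/
theorem ZH_alternative_representation (H : ℝ) (hH : H ∈ Set.Ioo (1/2 : ℝ) 1)
    (s t : ℝ) (hs : 0 < s) (hst : s < t) :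
    ((H - 1/2) * s ^ ((1:ℝ)/2 - H) * ∫ u in s..t, u ^ (H - 1/2) * (u - s) ^ (H - 3/2)
        = (t / s) ^ (H - 1/2) * (t - s) ^ (H - 1/2)
          - (H - 1/2) * s ^ ((1:ℝ)/2 - H) * ∫ u in s..t, u ^ (H - 3/2) * (u - s) ^ (H - 1/2))
    ∧ ∀ T : ℝ, t ≤ T →
        gammaStar H T (Set.indicator (Set.Icc (0:ℝ) t) fun _ => (1:ℝ)) s = ZH H t s := by
  obtain ⟨hH1, hH2⟩ := hH
  have ht : 0 < t := hs.trans hst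
  have ha0 : 0 < H - 1/2 := by linarith
  have huIcc : uIcc s t = Icc s t := uIcc_of_le hst.le
  -- interval integrability of the two integrands
  have hint2 : IntervalIntegrable (fun u => u ^ (H - 1/2) * (u - s) ^ (H - 3/2))
      volume s t := by
    have hbase : IntervalIntegrable (fun u => (u - s) ^ (H - 3/2)) volume s t := by
      have := (intervalIntegral.intervalIntegrable_rpow' (a := 0) (b := t - s)
        (r := H - 3/2) (by linarith)).comp_sub_right s
      simpa using this
    have hcont : ContinuousOn (fun u : ℝ => u ^ (H - 1/2)) (uIcc s t) := by
      apply ContinuousOn.rpow_const continuousOn_id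
      intro x hx
      rw [huIcc] at hx
      exact Or.inl (ne_of_gt (lt_of_lt_of_le hs hx.1))
    exact hbase.continuousOn_mul hcont
  have hint1 : IntervalIntegrable (fun u => u ^ (H - 3/2) * (u - s) ^ (H - 1/2))
      volume s t := by
    apply ContinuousOn.intervalIntegrable
    apply ContinuousOn.mul
    · apply ContinuousOn.rpow_const continuousOn_id
      intro x hx
      rw [huIcc] at hx
      exact Or.inl (ne_of_gt (lt_of_lt_of_le hs hx.1))
    · apply ContinuousOn.rpow_const (continuousOn_id.sub continuousOn_const)
      intro x _
      exact Or.inr ha0.le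
  -- FTC for F u = u^(H-1/2) * (u-s)^(H-1/2)
  have ftc : ∫ u in s..t,
      ((H - 1/2) * (u ^ (H - 3/2) * (u - s) ^ (H - 1/2))
        + (H - 1/2) * (u ^ (H - 1/2) * (u - s) ^ (H - 3/2)))
      = t ^ (H - 1/2) * (t - s) ^ (H - 1/2) := by
    have h0 : (fun u : ℝ => u ^ (H - 1/2) * (u - s) ^ (H - 1/2)) s
        = 0 := by
      show s ^ (H - 1/2) * (s - s) ^ (H - 1/2) = 0
      rw [sub_self, Real.zero_rpow (ne_of_gt ha0), mul_zero]
    have := intervalIntegral.integral_eq_sub_of_hasDeriv_right_of_le (a := s) (b := t)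
      (f := fun u => u ^ (H - 1/2) * (u - s) ^ (H - 1/2))
      (f' := fun u => (H - 1/2) * (u ^ (H - 3/2) * (u - s) ^ (H - 1/2))
        + (H - 1/2) * (u ^ (H - 1/2) * (u - s) ^ (H - 3/2)))
      hst.le
      ?_ ?_ ?_
    · rw [this, show s ^ (H - 1/2) * (s - s) ^ (H - 1/2) = 0 from h0, sub_zero]
    · apply ContinuousOn.mul
      · apply ContinuousOn.rpow_const continuousOn_id
        intro x hx
        exact Or.inl (ne_of_gt (lt_of_lt_of_le hs hx.1))
      · apply ContinuousOn.rpow_const (continuousOn_id.sub continuousOn_const)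
        intro x _
        exact Or.inr (by linarith)
    · intro x hx
      have hx0 : (0:ℝ) < x := hs.trans hx.1
      have hxs : (0:ℝ) < x - s := sub_pos.2 hx.1
      have d1 : HasDerivAt (fun u : ℝ => u ^ (H - 1/2))
          ((H - 1/2) * x ^ (H - 1/2 - 1)) x :=
        Real.hasDerivAt_rpow_const (Or.inl hx0.ne')
      have d2 : HasDerivAt (fun u : ℝ => (u - s) ^ (H - 1/2))
          (1 * (H - 1/2) * (x - s) ^ (H - 1/2 - 1)) x :=
        ((hasDerivAt_id x).sub_const s).rpow_const (Or.inl hxs.ne')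
      have := (d1.mul d2).hasDerivWithinAt (s := Ioi x)
      convert this using 1
      · rfl
      have e1 : H - 1/2 - 1 = H - 3/2 := by ring
      rw [e1]; ring
    · exact (hint1.const_mul _).add (hint2.const_mul _)
  rw [intervalIntegral.integral_add (hint1.const_mul _) (hint2.const_mul _),
      intervalIntegral.integral_const_mul, intervalIntegral.integral_const_mul] at ftc
  have hts : (t / s) ^ (H - 1/2) = t ^ (H - 1/2) * s ^ ((1:ℝ)/2 - H) := by
    have e : (1:ℝ)/2 - H = -(H - 1/2) := by ring
    rw [Real.div_rpow ht.le hs.le, e, Real.rpow_neg hs.le, div_eq_mul_inv]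
  have part1 : (H - 1/2) * s ^ ((1:ℝ)/2 - H)
        * ∫ u in s..t, u ^ (H - 1/2) * (u - s) ^ (H - 3/2)
      = (t / s) ^ (H - 1/2) * (t - s) ^ (H - 1/2)
        - (H - 1/2) * s ^ ((1:ℝ)/2 - H)
          * ∫ u in s..t, u ^ (H - 3/2) * (u - s) ^ (H - 1/2) := by
    rw [hts]
    linear_combination s ^ ((1:ℝ)/2 - H) * ftc
  refine ⟨part1, fun T hT => ?_⟩
  have hintEq : (∫ u in s..T, u ^ (H - 1/2) * (u - s) ^ (H - 3/2)
        * Set.indicator (Set.Icc (0:ℝ) t) (fun _ => (1:ℝ)) u)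
      = ∫ u in s..t, u ^ (H - 1/2) * (u - s) ^ (H - 3/2) := by
    have hsT : s ≤ T := hst.le.trans hT
    rw [intervalIntegral.integral_of_le hsT, intervalIntegral.integral_of_le hst.le]
    have hfun : (fun u : ℝ => u ^ (H - 1/2) * (u - s) ^ (H - 3/2)
          * Set.indicator (Set.Icc (0:ℝ) t) (fun _ => (1:ℝ)) u)
        = Set.indicator (Set.Icc (0:ℝ) t)
            (fun u => u ^ (H - 1/2) * (u - s) ^ (H - 3/2)) := by
      funext x
      by_cases hx : x ∈ Set.Icc (0:ℝ) t
      · rw [Set.indicator_of_mem hx, Set.indicator_of_mem hx, mul_one]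
      · rw [Set.indicator_of_notMem hx, Set.indicator_of_notMem hx, mul_zero]
    have hset : Set.Ioc s T ∩ Set.Icc 0 t = Set.Ioc s t := by
      apply Set.ext
      intro x
      simp only [Set.mem_inter_iff, Set.mem_Ioc, Set.mem_Icc]
      constructor
      · rintro ⟨⟨h1, _⟩, _, h4⟩; exact ⟨h1, h4⟩
      · rintro ⟨h1, h2⟩; exact ⟨⟨h1, h2.trans hT⟩, (hs.trans h1).le, h2⟩
    rw [hfun, MeasureTheory.setIntegral_indicator measurableSet_Icc, hset]
  unfold gammaStar ZH
  rw [hintEq, ← part1]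
  ring
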